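/- For all integers N ≥ 1, r ≥ 1 and n ≥ 1, B^{(r)}_{N,n} = n! · ∑_{k=1}^{n} (−1)^k ∑_{e_1+⋯+e_k=n, e_1,…,e_k ≥ 1} M_r(e_1) ⋯ M_r(e_k), where the inner sum is over all compositions of n into k positive parts. -/

import Mathlib

/-- The power series ∑_{i≥0} (N!/(N+i)!) xⁱ over ℚ. -/
noncomputable def hgSeries (N : ℕ) : PowerSeries ℚ :=
  PowerSeries.mk fun i => (N.factorial : ℚ) / ((N + i).factorial : ℚ)

/-- The higher order hypergeometric Bernoulli number `B^{(r)}_{N,n}`, defined so that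
`∑ (B^{(r)}_{N,n}/n!) xⁿ` is the r-th power of the multiplicative inverse of
`hgSeries N` in ℚ[[x]]. -/
noncomputable def hBr (N r n : ℕ) : ℚ :=
  (n.factorial : ℚ) * PowerSeries.coeff n ((hgSeries N)⁻¹ ^ r)

/-- `M_r(e) = ∑_{i₁+⋯+i_r=e} (N!)^r / ((N+i₁)! ⋯ (N+i_r)!)`. -/
noncomputable def M (N r e : ℕ) : ℚ :=
  ∑ i ∈ Finset.Nat.antidiagonalTuple r e,
    (N.factorial : ℚ) ^ r / ∏ j, ((N + i j).factorial : ℚ)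

open PowerSeries Finset

lemma coeff_pow_tuple (k n : ℕ) (φ : PowerSeries ℚ) :
    PowerSeries.coeff n (φ ^ k) =
      ∑ l ∈ Finset.Nat.antidiagonalTuple k n, ∏ j, PowerSeries.coeff (l j) φ := by
  rw [PowerSeries.coeff_pow]
  apply Finset.sum_nbij' (i := fun l => fun j : Fin k => l j)
    (j := fun e => Finsupp.onFinset (Finset.range k)
      (fun i => if h : i < k then e ⟨i, h⟩ else 0)
      (by intro i hi; simp only [mem_range]; by_contra h; simp [h] at hi))
  · intro l hl
    simp only [mem_finsuppAntidiag] at hl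
    rw [Finset.Nat.mem_antidiagonalTuple]
    rw [← hl.1]
    exact (Finset.sum_range (fun i => l i)).symm
  · intro e he
    rw [Finset.Nat.mem_antidiagonalTuple] at he
    simp only [mem_finsuppAntidiag]
    constructor
    · show ∑ i ∈ Finset.range k, (if h : i < k then e ⟨i, h⟩ else 0) = n
      rw [Finset.sum_range (fun i => if h : i < k then e ⟨i, h⟩ else 0), ← he]
      exact Finset.sum_congr rfl fun j _ => by simp [j.isLt]
    · exact Finsupp.support_onFinset_subset
  · intro l hl
    simp only [mem_finsuppAntidiag] at hl
    ext i
    simp only [Finsupp.onFinset_apply]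
    by_cases h : i < k
    · rw [dif_pos h]
    · rw [dif_neg h]
      by_contra h'
      exact h (mem_range.mp (hl.2 (Finsupp.mem_support_iff.mpr fun hh => h' hh.symm)))
  · intro e he
    funext j
    simp only [Finsupp.onFinset_apply, j.isLt, dif_pos]
  · intro l hl
    rw [Finset.prod_range fun i => _]

lemma constC_hg (N : ℕ) : PowerSeries.constantCoeff (hgSeries N) = 1 := by
  have : PowerSeries.constantCoeff (hgSeries N) = (N.factorial : ℚ) / ((N + 0).factorial : ℚ) := by
    rw [← PowerSeries.coeff_zero_eq_constantCoeff, hgSeries, PowerSeries.coeff_mk]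
  rw [this, Nat.add_zero, div_self (by exact_mod_cast N.factorial_ne_zero)]

lemma coeff_F (N r e : ℕ) : PowerSeries.coeff e (hgSeries N ^ r) = M N r e := by
  rw [coeff_pow_tuple, M]
  apply Finset.sum_congr rfl
  intro i _
  simp only [hgSeries, PowerSeries.coeff_mk]
  rw [Finset.prod_div_distrib, Finset.prod_const, Finset.card_univ, Fintype.card_fin]

lemma coeff_pow_zero_of (φ : PowerSeries ℚ) (h0 : PowerSeries.constantCoeff φ = 0)
    {m k : ℕ} (h : m < k) : PowerSeries.coeff m (φ ^ k) = 0 := by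
  rw [coeff_pow_tuple]
  apply Finset.sum_eq_zero
  intro l hl
  rw [Finset.Nat.mem_antidiagonalTuple] at hl
  have : ∃ j, l j = 0 := by
    by_contra h'
    push_neg at h'
    have hk : k ≤ ∑ j, l j := by
      calc k = ∑ _j : Fin k, 1 := by simp
      _ ≤ ∑ j, l j := Finset.sum_le_sum fun j _ => Nat.one_le_iff_ne_zero.2 (h' j)
    omega
  obtain ⟨j, hj⟩ := this
  apply Finset.prod_eq_zero (Finset.mem_univ j)
  rw [hj, PowerSeries.coeff_zero_eq_constantCoeff, h0]

theorem stmt11 (N r n : ℕ) (hN : 1 ≤ N) (hr : 1 ≤ r) (hn : 1 ≤ n) :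
    hBr N r n = (n.factorial : ℚ) * ∑ k ∈ Finset.Icc 1 n, (-1 : ℚ) ^ k *
      ∑ e ∈ (Finset.Nat.antidiagonalTuple k n).filter (fun e => ∀ j, 1 ≤ e j),
        ∏ j, M N r (e j) := by
  set F : PowerSeries ℚ := hgSeries N ^ r with hFdef
  have hF0 : PowerSeries.constantCoeff F ≠ 0 := by
    rw [hFdef, map_pow, constC_hg, one_pow]; exact one_ne_zero
  have hinv : (hgSeries N)⁻¹ ^ r = F⁻¹ := by
    rw [PowerSeries.eq_inv_iff_mul_eq_one hF0, hFdef, ← mul_pow,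
      PowerSeries.inv_mul_cancel _ (by rw [constC_hg]; exact one_ne_zero), one_pow]
  set H : PowerSeries ℚ := F - 1 with hHdef
  have hH0 : PowerSeries.constantCoeff H = 0 := by
    rw [hHdef, map_sub, map_one, hFdef, map_pow, constC_hg, one_pow, sub_self]
  set S : PowerSeries ℚ := ∑ k ∈ Finset.range (n + 1), (-H) ^ k with hSdef
  have hFS : F * S = 1 - (-H) ^ (n + 1) := by
    have h := geom_sum_mul (-H) (n + 1)
    rw [hSdef]
    linear_combination -h
  have hSinv : S = F⁻¹ - F⁻¹ * (-H) ^ (n + 1) := by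
    have : F⁻¹ * (F * S) = F⁻¹ * (1 - (-H) ^ (n + 1)) := by rw [hFS]
    rw [← mul_assoc, PowerSeries.inv_mul_cancel _ hF0, one_mul] at this
    rw [this]; ring
  have hcoeff0 : PowerSeries.coeff n (F⁻¹ * (-H) ^ (n + 1)) = 0 := by
    rw [PowerSeries.coeff_mul]
    apply Finset.sum_eq_zero
    intro p hp
    rw [Finset.HasAntidiagonal.mem_antidiagonal] at hp
    rw [coeff_pow_zero_of (-H) (by rw [map_neg, hH0, neg_zero]) (by omega), mul_zero]
  have hmain : PowerSeries.coeff n F⁻¹ = PowerSeries.coeff n S := by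
    rw [hSinv, map_sub, hcoeff0, sub_zero]
  have hrange : Finset.range (n + 1) = insert 0 (Finset.Icc 1 n) := by
    ext x; simp only [mem_range, mem_insert, mem_Icc]; omega
  have hterm : ∀ k ∈ Finset.Icc 1 n,
      PowerSeries.coeff n ((-H) ^ k) = (-1 : ℚ) ^ k *
        ∑ e ∈ (Finset.Nat.antidiagonalTuple k n).filter (fun e => ∀ j, 1 ≤ e j),
          ∏ j, M N r (e j) := by
    intro k hk
    classical
    have h1 : (-H) ^ k = PowerSeries.C ((-1 : ℚ) ^ k) * H ^ k := by
      rw [neg_pow]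
      congr 1
      rw [map_pow, map_neg, map_one]
    rw [h1, PowerSeries.coeff_C_mul]
    congr 1
    rw [coeff_pow_tuple]
    have hfil : ∑ e ∈ (Finset.Nat.antidiagonalTuple k n).filter (fun e => ∀ j, 1 ≤ e j),
        (∏ j, PowerSeries.coeff (e j) H)
        = ∑ l ∈ Finset.Nat.antidiagonalTuple k n, ∏ j, PowerSeries.coeff (l j) H := by
      apply Finset.sum_filter_of_ne
      intro e _ hne j
      by_contra h'
      apply hne
      apply Finset.prod_eq_zero (Finset.mem_univ j)
      have : e j = 0 := by omega
      rw [this, PowerSeries.coeff_zero_eq_constantCoeff, hH0]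
    rw [← hfil]
    apply Finset.sum_congr rfl
    intro e he
    rw [Finset.mem_filter] at he
    apply Finset.prod_congr rfl
    intro j _
    have hj := he.2 j
    rw [hHdef, map_sub, coeff_F, PowerSeries.coeff_one, if_neg (by omega), sub_zero]
  rw [hBr, hinv, hmain, hSdef, map_sum, hrange, Finset.sum_insert (by simp),
    pow_zero, PowerSeries.coeff_one, if_neg (by omega), zero_add]
  congr 1
  exact Finset.sum_congr rfl hterm
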